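/- Let G be a strongly connected almost bunchy finite graph that is not bunchy, and let Φ: G → M(G) be any right-resolver. Then the stability relation ∼_Φ is nontrivial: there exist distinct states J₁ ≠ J₂ of G with J₁ ∼_Φ J₂. -/

import Mathlib

/-- A finite directed multigraph. -/
structure FinGraph where
  V : Type
  E : Type
  [fintV : Fintype V]
  [fintE : Fintype E]
  [decV : DecidableEq V]
  [decE : DecidableEq E]
  src : E → V
  tgt : E → V

attribute [instance] FinGraph.fintV FinGraph.fintE FinGraph.decV FinGraph.decE

/-- A graph homomorphism. -/
structure GHom (G H : FinGraph) where
  eMap : G.E → H.E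
  vMap : G.V → H.V
  src_eq : ∀ e, H.src (eMap e) = vMap (G.src e)
  tgt_eq : ∀ e, H.tgt (eMap e) = vMap (G.tgt e)

def GHom.comp {G K H : FinGraph} (Δ : GHom K H) (Ψ : GHom G K) : GHom G H where
  eMap := Δ.eMap ∘ Ψ.eMap
  vMap := Δ.vMap ∘ Ψ.vMap
  src_eq := fun e => by
    simp only [Function.comp_apply, Δ.src_eq, Ψ.src_eq]
  tgt_eq := fun e => by
    simp only [Function.comp_apply, Δ.tgt_eq, Ψ.tgt_eq]

/-- The restriction of a homomorphism to the outgoing edges of a state. -/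
def outMap {G H : FinGraph} (Φ : GHom G H) (I : G.V) :
    {e : G.E // G.src e = I} → {f : H.E // H.src f = Φ.vMap I} :=
  fun e => ⟨Φ.eMap e.1, (Φ.src_eq e.1).trans (congrArg Φ.vMap e.2)⟩

/-- A right-resolver: a surjective homomorphism restricting to a bijection
on the outgoing edges of each state. -/
def IsRR {G H : FinGraph} (Φ : GHom G H) : Prop :=
  Function.Surjective Φ.vMap ∧ ∀ I : G.V, Function.Bijective (outMap Φ I)

/-- `IsPathFrom H I u`: the edge list `u` is a path in `H` starting at `I`. -/
def IsPathFrom (H : FinGraph) : H.V → List H.E → Prop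
  | _, [] => True
  | I, e :: u => H.src e = I ∧ IsPathFrom H (H.tgt e) u

/-- The terminal state of a path starting at `I`. -/
def pathEnd (H : FinGraph) (I : H.V) (u : List H.E) : H.V :=
  u.foldl (fun _ e => H.tgt e) I

/-- One-step transition: `I · a` is the target of the unique edge at `I`
lifting `a` (when `Φ` is right-resolving and `a` starts at the image of `I`). -/
noncomputable def step {G H : FinGraph} (Φ : GHom G H) (I : G.V) (a : H.E) : G.V :=
  if h : ∃ e : G.E, G.src e = I ∧ Φ.eMap e = a then G.tgt h.choose else I

/-- Transition along a word: `I · u`. -/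
noncomputable def transPath {G H : FinGraph} (Φ : GHom G H) (I : G.V) (u : List H.E) : G.V :=
  u.foldl (step Φ) I

/-- The stability relation of a right-resolver. -/
def Stable {G H : FinGraph} (Φ : GHom G H) (I₁ I₂ : G.V) : Prop :=
  Φ.vMap I₁ = Φ.vMap I₂ ∧
  ∀ u : List H.E, IsPathFrom H (Φ.vMap I₁) u →
    ∃ v : List H.E, IsPathFrom H (pathEnd H (Φ.vMap I₁) u) v ∧
      transPath Φ I₁ (u ++ v) = transPath Φ I₂ (u ++ v)

/-- A right-resolver is synchronizing if each fiber of its state map is a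
single stability class. -/
def Synchronizing {G H : FinGraph} (Φ : GHom G H) : Prop :=
  ∀ I₁ I₂ : G.V, Φ.vMap I₁ = Φ.vMap I₂ → Stable Φ I₁ I₂

/-- The fiber of the state map over a state of the codomain. -/
def fiber {G H : FinGraph} (Φ : GHom G H) (I : H.V) : Set G.V := {J | Φ.vMap J = I}

/-- The image `U · u` of a set of states under transition along a word. -/
noncomputable def setTrans {G H : FinGraph} (Φ : GHom G H) (U : Set G.V)
    (u : List H.E) : Set G.V :=
  (fun J => transPath Φ J u) '' U

/-- A minimal image of a right-resolver. -/
def IsMinImage {G H : FinGraph} (Φ : GHom G H) (U : Set G.V) : Prop :=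
  ∃ (I : H.V) (u : List H.E), IsPathFrom H I u ∧ U = setTrans Φ (fiber Φ I) u ∧
    ∀ v : List H.E, IsPathFrom H (pathEnd H I u) v →
      (setTrans Φ U v).ncard = U.ncard

/-- Strong connectedness: a directed path between every ordered pair of states. -/
def StronglyConnected (G : FinGraph) : Prop :=
  ∀ I J : G.V, ∃ u : List G.E, IsPathFrom G I u ∧ pathEnd G I u = J

def MinimalRR (M : FinGraph) : Prop :=
  ∀ (H : FinGraph) (Φ : GHom M H), IsRR Φ →
    Function.Bijective Φ.eMap ∧ Function.Bijective Φ.vMap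

/-- Bunchiness relative to the state map σ onto the minimal factor. -/
def BunchyVia {G M : FinGraph} (σ : G.V → M.V) : Prop :=
  ∀ e e' : G.E, G.src e = G.src e' → σ (G.tgt e) = σ (G.tgt e') →
    G.tgt e = G.tgt e'

/-- Almost bunchiness: for every fiber-image state J, at most one state in
each σ-fiber has two distinct followers in the σ-fiber of J. -/
def AlmostBunchyVia {G M : FinGraph} (σ : G.V → M.V) : Prop :=
  ∀ (J : M.V) (I₁' I₂' : G.V), σ I₁' = σ I₂' →
    (∃ e e' : G.E, G.src e = I₁' ∧ G.src e' = I₁' ∧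
      σ (G.tgt e) = J ∧ σ (G.tgt e') = J ∧ G.tgt e ≠ G.tgt e') →
    (∃ e e' : G.E, G.src e = I₂' ∧ G.src e' = I₂' ∧
      σ (G.tgt e) = J ∧ σ (G.tgt e') = J ∧ G.tgt e ≠ G.tgt e') →
    I₁' = I₂'

section Aux

open Set

variable {G M : FinGraph} {Φ : GHom G M}

/-! ### Lifting edges -/

lemma exists_lift (hΦ : IsRR Φ) (K : G.V) (a : M.E) (ha : M.src a = Φ.vMap K) :
    ∃ e : G.E, G.src e = K ∧ Φ.eMap e = a := by
  obtain ⟨⟨e, he⟩, hfe⟩ := (hΦ.2 K).2 ⟨a, ha⟩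
  exact ⟨e, he, congrArg Subtype.val hfe⟩

lemma lift_unique (hΦ : IsRR Φ) {e e' : G.E} (hs : G.src e = G.src e')
    (hm : Φ.eMap e = Φ.eMap e') : e = e' := by
  have := (hΦ.2 (G.src e)).1 (a₁ := ⟨e, rfl⟩) (a₂ := ⟨e', hs.symm⟩)
    (by simp [outMap, hm])
  exact congrArg Subtype.val this

lemma step_eq' (hΦ : IsRR Φ) {K : G.V} {a : M.E} {e : G.E}
    (he : G.src e = K) (hae : Φ.eMap e = a) : step Φ K a = G.tgt e := by
  have h : ∃ f : G.E, G.src f = K ∧ Φ.eMap f = a := ⟨e, he, hae⟩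
  rw [step, dif_pos h]
  have hspec := h.choose_spec
  have : h.choose = e :=
    lift_unique hΦ (hspec.1.trans he.symm) (hspec.2.trans hae.symm)
  rw [this]

lemma step_fiber (hΦ : IsRR Φ) {K : G.V} {a : M.E} (ha : M.src a = Φ.vMap K) :
    Φ.vMap (step Φ K a) = M.tgt a := by
  obtain ⟨e, he, hae⟩ := exists_lift hΦ K a ha
  rw [step_eq' hΦ he hae, ← hae, Φ.tgt_eq]

/-! ### Path lemmas -/

lemma pathEnd_append (H : FinGraph) (I : H.V) (u v : List H.E) :
    pathEnd H I (u ++ v) = pathEnd H (pathEnd H I u) v :=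
  List.foldl_append

lemma isPathFrom_append {H : FinGraph} {I : H.V} {u v : List H.E} :
    IsPathFrom H I (u ++ v) ↔ IsPathFrom H I u ∧ IsPathFrom H (pathEnd H I u) v := by
  induction u generalizing I with
  | nil => simp [IsPathFrom, pathEnd]
  | cons e u ih =>
    show (H.src e = I ∧ IsPathFrom H (H.tgt e) (u ++ v)) ↔ _
    constructor
    · rintro ⟨h1, h2⟩
      rw [ih] at h2
      exact ⟨⟨h1, h2.1⟩, h2.2⟩
    · rintro ⟨⟨h1, h2⟩, h3⟩
      exact ⟨h1, ih.mpr ⟨h2, h3⟩⟩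

lemma transPath_append (I : G.V) (u v : List M.E) :
    transPath Φ I (u ++ v) = transPath Φ (transPath Φ I u) v :=
  List.foldl_append

lemma transPath_fiber (hΦ : IsRR Φ) :
    ∀ (u : List M.E) (I : G.V), IsPathFrom M (Φ.vMap I) u →
      Φ.vMap (transPath Φ I u) = pathEnd M (Φ.vMap I) u := by
  intro u
  induction u with
  | nil => intro I _; rfl
  | cons a u ih =>
    intro I hu
    obtain ⟨ha, hu⟩ := hu
    have hst : Φ.vMap (step Φ I a) = M.tgt a := step_fiber hΦ ha
    have := ih (step Φ I a) (by rw [hst]; exact hu)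
    simpa [transPath, pathEnd, hst] using this

lemma map_path (Φ : GHom G M) :
    ∀ (w : List G.E) (I : G.V), IsPathFrom G I w →
      IsPathFrom M (Φ.vMap I) (w.map Φ.eMap) ∧
        pathEnd M (Φ.vMap I) (w.map Φ.eMap) = Φ.vMap (pathEnd G I w) := by
  intro w
  induction w with
  | nil => intro I _; exact ⟨trivial, rfl⟩
  | cons e w ih =>
    intro I hw
    obtain ⟨he, hw⟩ := hw
    obtain ⟨h1, h2⟩ := ih (G.tgt e) hw
    refine ⟨⟨by rw [Φ.src_eq, he], by rwa [Φ.tgt_eq]⟩, ?_⟩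
    simpa [pathEnd, Φ.tgt_eq] using h2

lemma transPath_map (hΦ : IsRR Φ) :
    ∀ (w : List G.E) (I : G.V), IsPathFrom G I w →
      transPath Φ I (w.map Φ.eMap) = pathEnd G I w := by
  intro w
  induction w with
  | nil => intro I _; rfl
  | cons e w ih =>
    intro I hw
    obtain ⟨he, hw⟩ := hw
    have hst : step Φ I (Φ.eMap e) = G.tgt e := step_eq' hΦ he rfl
    simpa [transPath, pathEnd, hst] using ih (G.tgt e) hw

/-! ### setTrans lemmas -/

lemma setTrans_append (U : Set G.V) (u v : List M.E) :
    setTrans Φ U (u ++ v) = setTrans Φ (setTrans Φ U u) v := by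
  simp only [setTrans, Set.image_image]
  exact Set.image_congr fun K _ => transPath_append K u v

lemma setTrans_mono {U V : Set G.V} (h : U ⊆ V) (u : List M.E) :
    setTrans Φ U u ⊆ setTrans Φ V u :=
  Set.image_mono h

lemma setTrans_subset_fiber (hΦ : IsRR Φ) {U : Set G.V} {P : M.V}
    (hU : U ⊆ fiber Φ P) {u : List M.E} (hu : IsPathFrom M P u) :
    setTrans Φ U u ⊆ fiber Φ (pathEnd M P u) := by
  rintro _ ⟨K, hK, rfl⟩
  have hσ : Φ.vMap K = P := hU hK
  have := transPath_fiber hΦ u K (by rw [hσ]; exact hu)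
  rw [hσ] at this
  exact this

lemma setTrans_ncard_le (U : Set G.V) (u : List M.E) :
    (setTrans Φ U u).ncard ≤ U.ncard :=
  Set.ncard_image_le (Set.toFinite U)

/-! ### Minimal images -/

lemma fiber_nonempty (hΦ : IsRR Φ) (P : M.V) : (fiber Φ P).Nonempty := hΦ.1 P

lemma exists_minImage_extension (hΦ : IsRR Φ) (P : M.V) (u : List M.E)
    (hu : IsPathFrom M P u) :
    ∃ v : List M.E, IsPathFrom M (pathEnd M P u) v ∧
      IsMinImage Φ (setTrans Φ (fiber Φ P) (u ++ v)) := by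
  set S : Set ℕ := {n | ∃ v, IsPathFrom M (pathEnd M P u) v ∧
    (setTrans Φ (fiber Φ P) (u ++ v)).ncard = n} with hS
  have hSne : S.Nonempty := ⟨_, [], trivial, rfl⟩
  obtain ⟨v, hv, hvcard⟩ := Nat.sInf_mem hSne
  refine ⟨v, hv, P, u ++ v, isPathFrom_append.mpr ⟨hu, hv⟩, rfl, ?_⟩
  intro w hw
  rw [pathEnd_append] at hw
  have hmem : (setTrans Φ (fiber Φ P) ((u ++ v) ++ w)).ncard ∈ S := by
    refine ⟨v ++ w, isPathFrom_append.mpr ⟨hv, hw⟩, ?_⟩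
    rw [List.append_assoc]
  have h1 : sInf S ≤ (setTrans Φ (setTrans Φ (fiber Φ P) (u ++ v)) w).ncard := by
    rw [← setTrans_append]
    exact Nat.sInf_le hmem
  have h2 : (setTrans Φ (setTrans Φ (fiber Φ P) (u ++ v)) w).ncard ≤
      (setTrans Φ (fiber Φ P) (u ++ v)).ncard := setTrans_ncard_le _ _
  omega

lemma minImage_mem_fiber (hΦ : IsRR Φ) {U : Set G.V} (hU : IsMinImage Φ U) :
    ∃ P, U ⊆ fiber Φ P ∧ U.Nonempty := by
  obtain ⟨I, u, hu, rfl, -⟩ := hU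
  refine ⟨pathEnd M I u, setTrans_subset_fiber hΦ (fun K hK => hK) hu, ?_⟩
  exact (fiber_nonempty hΦ I).image _

lemma minImage_trans (hΦ : IsRR Φ) {U : Set G.V} (hU : IsMinImage Φ U)
    {K : G.V} (hK : K ∈ U) {v : List M.E} (hv : IsPathFrom M (Φ.vMap K) v) :
    IsMinImage Φ (setTrans Φ U v) ∧ (setTrans Φ U v).ncard = U.ncard := by
  obtain ⟨I, u, hu, rfl, hmin⟩ := hU
  have hσK : Φ.vMap K = pathEnd M I u :=
    setTrans_subset_fiber hΦ (fun L hL => hL) hu hK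
  rw [hσK] at hv
  refine ⟨⟨I, u ++ v, isPathFrom_append.mpr ⟨hu, hv⟩, (setTrans_append _ _ _).symm,
    ?_⟩, hmin v hv⟩
  intro w hw
  rw [pathEnd_append] at hw
  rw [← setTrans_append, hmin (v ++ w) (isPathFrom_append.mpr ⟨hv, hw⟩), hmin v hv]

lemma M_strongly_connected (hΦ : IsRR Φ) (hsc : StronglyConnected G) :
    StronglyConnected M := by
  intro P Q
  obtain ⟨I, hI⟩ := hΦ.1 P
  obtain ⟨K, hK⟩ := hΦ.1 Q
  obtain ⟨w, hw, hend⟩ := hsc I K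
  obtain ⟨h1, h2⟩ := map_path Φ w I hw
  exact ⟨w.map Φ.eMap, by rwa [hI] at h1, by rw [← hI, h2, hend, hK]⟩

lemma minImage_ncard_le (hΦ : IsRR Φ) (hsc : StronglyConnected G)
    {U U' : Set G.V} (hU : IsMinImage Φ U) (hU' : IsMinImage Φ U') :
    U.ncard ≤ U'.ncard := by
  obtain ⟨I, u, hu, rfl, hmin⟩ := hU
  obtain ⟨I', u', hu', hU'eq, -⟩ := hU'
  obtain ⟨w, hw, hwend⟩ := M_strongly_connected hΦ hsc (pathEnd M I u) I'
  set U := setTrans Φ (fiber Φ I) u with hUdef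
  have hpath : IsPathFrom M (pathEnd M I u) (w ++ u') :=
    isPathFrom_append.mpr ⟨hw, by rwa [hwend]⟩
  have hsub : setTrans Φ U (w ++ u') ⊆ setTrans Φ (fiber Φ I') u' := by
    rw [setTrans_append]
    refine setTrans_mono ?_ u'
    have hUfib : U ⊆ fiber Φ (pathEnd M I u) :=
      setTrans_subset_fiber hΦ (fun L hL => hL) hu
    have := setTrans_subset_fiber hΦ hUfib hw
    rwa [hwend] at this
  have hcard : (setTrans Φ U (w ++ u')).ncard = U.ncard := hmin (w ++ u') hpath
  rw [hU'eq, ← hcard]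
  exact Set.ncard_le_ncard hsub (Set.toFinite _)

lemma minImage_ncard_eq (hΦ : IsRR Φ) (hsc : StronglyConnected G)
    {U U' : Set G.V} (hU : IsMinImage Φ U) (hU' : IsMinImage Φ U') :
    U.ncard = U'.ncard :=
  le_antisymm (minImage_ncard_le hΦ hsc hU hU') (minImage_ncard_le hΦ hsc hU' hU)

lemma exists_minImage_mem (hΦ : IsRR Φ) (hsc : StronglyConnected G) (K : G.V) :
    ∃ U, IsMinImage Φ U ∧ K ∈ U := by
  obtain ⟨v, hv, hMin⟩ :=
    exists_minImage_extension hΦ (Φ.vMap K) [] trivial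
  obtain ⟨P, hXf, ⟨L, hL⟩⟩ := minImage_mem_fiber hΦ hMin
  obtain ⟨w, hw, hwend⟩ := hsc L K
  obtain ⟨hpath, -⟩ := map_path Φ w L hw
  refine ⟨_, (minImage_trans hΦ hMin hL hpath).1, ?_⟩
  have hK : transPath Φ L (w.map Φ.eMap) = K := by
    rw [transPath_map hΦ w L hw, hwend]
  have hmem : transPath Φ L (w.map Φ.eMap) ∈
      setTrans Φ (setTrans Φ (fiber Φ (Φ.vMap K)) ([] ++ v)) (w.map Φ.eMap) :=
    Set.mem_image_of_mem _ hL
  rwa [hK] at hmem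

/-! ### Stability from a pair of minimal images differing in one state -/

lemma stable_of_insert (hΦ : IsRR Φ) (hsc : StronglyConnected G)
    {C : Set G.V} {J₁ J₂ : G.V} {J : M.V}
    (h₁ : IsMinImage Φ (insert J₁ C)) (h₂ : IsMinImage Φ (insert J₂ C))
    (hf₁ : insert J₁ C ⊆ fiber Φ J) (hf₂ : insert J₂ C ⊆ fiber Φ J)
    (hJ₂C : J₂ ∉ C) : Stable Φ J₁ J₂ := by
  have hσ1 : Φ.vMap J₁ = J := hf₁ (Set.mem_insert _ _)
  have hσ2 : Φ.vMap J₂ = J := hf₂ (Set.mem_insert _ _)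
  refine ⟨hσ1.trans hσ2.symm, ?_⟩
  intro u hu
  rw [hσ1] at hu ⊢
  obtain ⟨v, hv, hX⟩ := exists_minImage_extension hΦ J u hu
  refine ⟨v, hv, ?_⟩
  set X := setTrans Φ (fiber Φ J) (u ++ v) with hXdef
  have huv : IsPathFrom M J (u ++ v) := isPathFrom_append.mpr ⟨hu, hv⟩
  have h1t := minImage_trans hΦ h₁ (Set.mem_insert J₁ C) (v := u ++ v)
    (by rw [hσ1]; exact huv)
  have h2t := minImage_trans hΦ h₂ (Set.mem_insert J₂ C) (v := u ++ v)
    (by rw [hσ2]; exact huv)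
  have hsub1 : setTrans Φ (insert J₁ C) (u ++ v) ⊆ X :=
    setTrans_mono hf₁ (u ++ v)
  have hsub2 : setTrans Φ (insert J₂ C) (u ++ v) ⊆ X :=
    setTrans_mono hf₂ (u ++ v)
  have hc1 : X.ncard = (setTrans Φ (insert J₁ C) (u ++ v)).ncard :=
    minImage_ncard_eq hΦ hsc hX h1t.1
  have hc2 : X.ncard = (setTrans Φ (insert J₂ C) (u ++ v)).ncard :=
    minImage_ncard_eq hΦ hsc hX h2t.1
  have hEq1 : setTrans Φ (insert J₁ C) (u ++ v) = X :=
    Set.eq_of_subset_of_ncard_le hsub1 hc1.le (Set.toFinite _)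
  have inj2 : Set.InjOn (fun K => transPath Φ K (u ++ v)) (insert J₂ C) :=
    Set.injOn_of_ncard_image_eq h2t.2 (Set.toFinite _)
  have hmem : transPath Φ J₂ (u ++ v) ∈ setTrans Φ (insert J₁ C) (u ++ v) := by
    rw [hEq1]
    exact hsub2 ⟨J₂, Set.mem_insert _ _, rfl⟩
  obtain ⟨K, hK, hKeq⟩ := hmem
  rcases Set.mem_insert_iff.mp hK with rfl | hKC
  · exact hKeq
  · exact absurd (inj2 (Set.mem_insert_of_mem _ hKC) (Set.mem_insert _ _) hKeq)
      (fun h => hJ₂C (h ▸ hKC))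

end Aux

/-- a strongly connected, almost bunchy but not bunchy graph has
nontrivial stability relation for any right-resolver onto its minimal factor. -/
theorem almost_bunchy_not_bunchy_stable {G M : FinGraph} (Φ : GHom G M)
    (hΦ : IsRR Φ) (hM : MinimalRR M) (hsc : StronglyConnected G)
    (hab : AlmostBunchyVia Φ.vMap) (hnb : ¬ BunchyVia Φ.vMap) :
    ∃ J₁ J₂ : G.V, J₁ ≠ J₂ ∧ Stable Φ J₁ J₂ := by
  unfold BunchyVia at hnb
  push_neg at hnb
  obtain ⟨e, e', hsrc, hσt, hnt⟩ := hnb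
  set I := G.src e with hI
  obtain ⟨U, hU, hIU⟩ := exists_minImage_mem hΦ hsc I
  obtain ⟨P, hUf, -⟩ := minImage_mem_fiber hΦ hU
  have hUf' : U ⊆ fiber Φ (Φ.vMap I) := by
    have hPI : Φ.vMap I = P := hUf hIU
    rwa [hPI]
  have ha : M.src (Φ.eMap e) = Φ.vMap I := Φ.src_eq e
  have ha' : M.src (Φ.eMap e') = Φ.vMap I := by rw [Φ.src_eq, ← hsrc]
  have hpa : IsPathFrom M (Φ.vMap I) [Φ.eMap e] := ⟨ha, trivial⟩
  have hpa' : IsPathFrom M (Φ.vMap I) [Φ.eMap e'] := ⟨ha', trivial⟩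
  have htJ : M.tgt (Φ.eMap e) = Φ.vMap (G.tgt e) := Φ.tgt_eq e
  have htJ' : M.tgt (Φ.eMap e') = Φ.vMap (G.tgt e) := (Φ.tgt_eq e').trans hσt.symm
  have h1 := minImage_trans hΦ hU hIU (v := [Φ.eMap e]) hpa
  have h2 := minImage_trans hΦ hU hIU (v := [Φ.eMap e']) hpa'
  have hf1 : setTrans Φ U [Φ.eMap e] ⊆ fiber Φ (Φ.vMap (G.tgt e)) := by
    have := setTrans_subset_fiber hΦ hUf' hpa
    rwa [show pathEnd M (Φ.vMap I) [Φ.eMap e] = M.tgt (Φ.eMap e) from rfl, htJ]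
      at this
  have hf2 : setTrans Φ U [Φ.eMap e'] ⊆ fiber Φ (Φ.vMap (G.tgt e)) := by
    have := setTrans_subset_fiber hΦ hUf' hpa'
    rwa [show pathEnd M (Φ.vMap I) [Φ.eMap e'] = M.tgt (Φ.eMap e') from rfl, htJ']
      at this
  have hstep1 : step Φ I (Φ.eMap e) = G.tgt e := step_eq' hΦ rfl rfl
  have hstep2 : step Φ I (Φ.eMap e') = G.tgt e' := step_eq' hΦ hsrc.symm rfl
  have hagree : ∀ K ∈ U, K ≠ I → step Φ K (Φ.eMap e) = step Φ K (Φ.eMap e') := by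
    intro K hKU hKI
    have hσK : Φ.vMap K = Φ.vMap I := hUf' hKU
    obtain ⟨f, hf, hfa⟩ := exists_lift hΦ K (Φ.eMap e) (ha.trans hσK.symm)
    obtain ⟨f', hf', hfa'⟩ := exists_lift hΦ K (Φ.eMap e') (ha'.trans hσK.symm)
    rw [step_eq' hΦ hf hfa, step_eq' hΦ hf' hfa']
    by_contra hne2
    refine hKI (hab (Φ.vMap (G.tgt e)) K I hσK ⟨f, f', hf, hf', ?_, ?_, hne2⟩
      ⟨e, e', rfl, hsrc.symm, rfl, hσt.symm, hnt⟩)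
    · rw [← Φ.tgt_eq, hfa, htJ]
    · rw [← Φ.tgt_eq, hfa', htJ']
  have hUsplit : U = insert I (U \ {I}) := by
    rw [Set.insert_diff_singleton, Set.insert_eq_self.mpr hIU]
  have hC' : (fun K => transPath Φ K [Φ.eMap e']) '' (U \ {I}) =
      (fun K => transPath Φ K [Φ.eMap e]) '' (U \ {I}) :=
    Set.image_congr fun K hK => (hagree K hK.1 (fun h => hK.2 (by simp [h]))).symm
  have hU1 : setTrans Φ U [Φ.eMap e] =
      insert (G.tgt e) ((fun K => transPath Φ K [Φ.eMap e]) '' (U \ {I})) := by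
    show (fun K => transPath Φ K [Φ.eMap e]) '' U = _
    conv_lhs => rw [hUsplit]
    rw [Set.image_insert_eq,
      show transPath Φ I [Φ.eMap e] = G.tgt e from hstep1]
  have hU2 : setTrans Φ U [Φ.eMap e'] =
      insert (G.tgt e') ((fun K => transPath Φ K [Φ.eMap e]) '' (U \ {I})) := by
    show (fun K => transPath Φ K [Φ.eMap e']) '' U = _
    conv_lhs => rw [hUsplit]
    rw [Set.image_insert_eq,
      show transPath Φ I [Φ.eMap e'] = G.tgt e' from hstep2, hC']
  have inj2 : Set.InjOn (fun K => transPath Φ K [Φ.eMap e']) U := by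
    refine Set.injOn_of_ncard_image_eq ?_ (Set.toFinite _)
    exact h2.2
  have hJ2C : G.tgt e' ∉ (fun K => transPath Φ K [Φ.eMap e]) '' (U \ {I}) := by
    rintro ⟨K, ⟨hKU, hKI⟩, hKeq⟩
    have hKne : K ≠ I := fun h => hKI (by simp [h])
    have hKeq' : step Φ K (Φ.eMap e') = G.tgt e' :=
      (hagree K hKU hKne).symm.trans hKeq
    exact hKne (inj2 hKU hIU (hKeq'.trans hstep2.symm))
  refine ⟨G.tgt e, G.tgt e', hnt, ?_⟩
  exact stable_of_insert hΦ hsc (hU1 ▸ h1.1) (hU2 ▸ h2.1) (hU1 ▸ hf1)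
    (hU2 ▸ hf2) hJ2C
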